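/- Let $\beta > 0$ and let $\psi : [0,\infty) \to [0,\infty)$ be a continuous function with $\lim_{t \to \infty} \psi(t) = 0$. Suppose there is $K > 0$ such that for all $t > 0$ and all $u \in (0,1]$, $\psi(t) \le K u^{2\beta} + 2\psi(tu)^2$. Then for every $\alpha < \beta$, $\psi(t) = O(t^{-\alpha})$ as $t \to \infty$. -/

import Mathlib

open Filter

private lemma boot_step (β : ℝ) (hβ : 0 < β) (ψ : ℝ → ℝ)
    (hnn : ∀ t, 0 ≤ t → 0 ≤ ψ t)
    (K : ℝ) (hK : 0 < K)
    (hrec : ∀ t : ℝ, 0 < t → ∀ u ∈ Set.Ioc (0 : ℝ) 1, ψ t ≤ K * u ^ (2 * β) + 2 * ψ (t * u) ^ 2)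
    (γ C T : ℝ) (hγ : 0 < γ) (hγβ : γ ≤ β) (hT : 1 ≤ T)
    (hb : ∀ t, T ≤ t → ψ t ≤ C * t ^ (-γ)) :
    ∃ C' T', 0 ≤ C' ∧ 1 ≤ T' ∧
      ∀ t, T' ≤ t → ψ t ≤ C' * t ^ (-(2 * β * γ / (β + γ))) := by
  have hbγ : 0 < β + γ := by linarith
  set θ : ℝ := γ / (β + γ) with hθdef
  have hθ0 : 0 < θ := div_pos hγ hbγ
  have hθ1 : θ < 1 := by rw [div_lt_one hbγ]; linarith
  have h1θ : 1 - θ = β / (β + γ) := by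
    rw [hθdef]; field_simp; ring
  have hC0 : 0 ≤ K + 2 * C ^ 2 := by positivity
  refine ⟨K + 2 * C ^ 2, max (T ^ ((β + γ) / β)) 1, hC0, le_max_right _ _, ?_⟩
  intro t ht
  have ht1 : (1 : ℝ) ≤ t := le_trans (le_max_right _ _) ht
  have ht0 : (0 : ℝ) < t := lt_of_lt_of_le one_pos ht1
  have hu0 : 0 < t ^ (-θ) := Real.rpow_pos_of_pos ht0 _
  have hu1 : t ^ (-θ) ≤ 1 := Real.rpow_le_one_of_one_le_of_nonpos ht1 (by linarith)
  have h1 := hrec t ht0 (t ^ (-θ)) ⟨hu0, hu1⟩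
  have htu : t * t ^ (-θ) = t ^ (1 - θ) := by
    rw [sub_eq_add_neg, Real.rpow_add ht0, Real.rpow_one]
  have hTnn : (0 : ℝ) ≤ T := by linarith
  have hs : T ≤ t ^ (1 - θ) := by
    have h2 : T ^ ((β + γ) / β) ≤ t := le_trans (le_max_left _ _) ht
    have hexp : (β + γ) / β * (1 - θ) = 1 := by
      rw [h1θ]; field_simp
    calc T = T ^ ((β + γ) / β * (1 - θ)) := by rw [hexp, Real.rpow_one]
      _ = (T ^ ((β + γ) / β)) ^ (1 - θ) := Real.rpow_mul hTnn _ _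
      _ ≤ t ^ (1 - θ) := Real.rpow_le_rpow (Real.rpow_nonneg hTnn _) h2 (by linarith)
  have hA : (t ^ (-θ)) ^ (2 * β) = t ^ (-(2 * β * γ / (β + γ))) := by
    rw [← Real.rpow_mul ht0.le]
    congr 1
    rw [hθdef]; ring
  have hsq : ψ (t * t ^ (-θ)) ^ 2 ≤ C ^ 2 * t ^ (-(2 * β * γ / (β + γ))) := by
    have h0 : 0 ≤ ψ (t * t ^ (-θ)) := hnn _ (by positivity)
    have hb2 : ψ (t * t ^ (-θ)) ≤ C * t ^ ((1 - θ) * (-γ)) := by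
      rw [htu]
      calc ψ (t ^ (1 - θ)) ≤ C * (t ^ (1 - θ)) ^ (-γ) := hb _ hs
        _ = C * t ^ ((1 - θ) * (-γ)) := by rw [← Real.rpow_mul ht0.le]
    calc ψ (t * t ^ (-θ)) ^ 2 ≤ (C * t ^ ((1 - θ) * (-γ))) ^ 2 :=
          pow_le_pow_left₀ h0 hb2 2
      _ = C ^ 2 * t ^ (-(2 * β * γ / (β + γ))) := by
          rw [mul_pow, ← Real.rpow_natCast (t ^ ((1 - θ) * (-γ))) 2,
            ← Real.rpow_mul ht0.le]
          congr 2
          rw [h1θ]; push_cast; ring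
  have h1' : ψ t ≤ K * t ^ (-(2 * β * γ / (β + γ))) + 2 * ψ (t * t ^ (-θ)) ^ 2 := by
    rw [← hA]; exact h1
  have h2' : 2 * ψ (t * t ^ (-θ)) ^ 2 ≤ 2 * (C ^ 2 * t ^ (-(2 * β * γ / (β + γ)))) := by
    linarith
  calc ψ t ≤ K * t ^ (-(2 * β * γ / (β + γ))) + 2 * (C ^ 2 * t ^ (-(2 * β * γ / (β + γ)))) := by
        linarith
    _ = (K + 2 * C ^ 2) * t ^ (-(2 * β * γ / (β + γ))) := by ring

private lemma initial_decay (β : ℝ) (hβ : 0 < β) (ψ : ℝ → ℝ)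
    (hcont : ContinuousOn ψ (Set.Ici 0)) (hnn : ∀ t, 0 ≤ t → 0 ≤ ψ t)
    (hlim : Tendsto ψ atTop (nhds 0))
    (K : ℝ) (hK : 0 < K)
    (hrec : ∀ t : ℝ, 0 < t → ∀ u ∈ Set.Ioc (0 : ℝ) 1, ψ t ≤ K * u ^ (2 * β) + 2 * ψ (t * u) ^ 2) :
    ∃ γ T, 0 < γ ∧ γ ≤ β ∧ 1 ≤ T ∧ ∀ t, T ≤ t → ψ t ≤ (1/4) * t ^ (-γ) := by
  obtain ⟨T₀, hT₀⟩ := Filter.eventually_atTop.1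
    (Filter.Tendsto.eventually_lt_const (by norm_num : (0:ℝ) < 1/8) hlim)
  set T : ℝ := max (max T₀ 2) ((32*K + 32) ^ (2*β)⁻¹) with hTdef
  have hT2 : (2:ℝ) ≤ T := le_trans (le_max_right _ _) (le_max_left _ _)
  have hT1 : (1:ℝ) ≤ T := by linarith
  have hT0 : (0:ℝ) < T := by linarith
  have hTT₀ : T₀ ≤ T := le_trans (le_max_left _ _) (le_max_left _ _)
  have hx : (0:ℝ) < 32*K + 32 := by positivity
  have hTpow : 32*K + 32 ≤ T ^ (2*β) := by
    calc 32*K + 32 = ((32*K + 32) ^ (2*β)⁻¹) ^ (2*β) :=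
          (Real.rpow_inv_rpow hx.le (by positivity)).symm
      _ ≤ T ^ (2*β) :=
          Real.rpow_le_rpow (Real.rpow_nonneg hx.le _) (le_max_right _ _) (by positivity)
  have hlogT : 0 < Real.log T := Real.log_pos (by linarith)
  set γ : ℝ := Real.log 2 / (2 * Real.log T) with hγdef
  have hγ0 : 0 < γ := div_pos (Real.log_pos one_lt_two) (by positivity)
  have hkey : T ^ (2*γ) = 2 := by
    rw [Real.rpow_def_of_pos hT0]
    have h : Real.log T * (2*γ) = Real.log 2 := by
      rw [hγdef]; field_simp
    rw [h, Real.exp_log (by norm_num)]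
  have h2le : (2:ℝ) < T ^ (2*β) := by linarith
  have hγβ : γ < β := by
    have hlog2 : Real.log 2 < Real.log (T ^ (2*β)) :=
      Real.log_lt_log (by norm_num) h2le
    rw [Real.log_rpow hT0] at hlog2
    rw [hγdef, div_lt_iff₀ (by positivity)]
    nlinarith
  refine ⟨γ, T, hγ0, hγβ.le, hT1, ?_⟩
  by_contra hcon
  push_neg at hcon
  obtain ⟨t₁, ht₁T, ht₁⟩ := hcon
  set S : Set ℝ := {t : ℝ | T ≤ t ∧ 1/4 * t ^ (-γ) < ψ t} with hSdef
  have hne : S.Nonempty := ⟨t₁, ht₁T, ht₁⟩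
  have hbdd : BddBelow S := ⟨T, fun x hx => hx.1⟩
  set t₀ : ℝ := sInf S with ht₀def
  have ht₀T : T ≤ t₀ := le_csInf hne (fun x hx => hx.1)
  have ht₀0 : 0 < t₀ := by linarith
  have hlt : ∀ s, T ≤ s → s < t₀ → ψ s ≤ 1/4 * s ^ (-γ) := by
    intro s hsT hst
    by_contra h
    push_neg at h
    exact absurd (csInf_le hbdd ⟨hsT, h⟩) (not_le.2 hst)
  -- ψ t₀ ≥ 1/4 * t₀^(-γ)
  have hcl : t₀ ∈ closure S := csInf_mem_closure hne hbdd
  have hmain : 1/4 * t₀ ^ (-γ) ≤ ψ t₀ := by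
    have hcontg : ContinuousOn (fun t : ℝ => ψ t - 1/4 * t ^ (-γ)) (Set.Ici T) := by
      apply ContinuousOn.sub
      · exact hcont.mono (fun x hx => le_trans hT0.le hx)
      · apply ContinuousOn.mul continuousOn_const
        intro x hx
        exact (Real.continuousAt_rpow_const x (-γ)
          (Or.inl (ne_of_gt (lt_of_lt_of_le hT0 hx)))).continuousWithinAt
    have hclosed : IsClosed (Set.Ici T ∩ (fun t : ℝ => ψ t - 1/4 * t ^ (-γ)) ⁻¹' Set.Ici 0) :=
      hcontg.preimage_isClosed_of_isClosed isClosed_Ici isClosed_Ici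
    have hsub : S ⊆ Set.Ici T ∩ (fun t : ℝ => ψ t - 1/4 * t ^ (-γ)) ⁻¹' Set.Ici 0 := by
      intro x hx
      exact ⟨hx.1, by simp only [Set.mem_preimage, Set.mem_Ici]; linarith [hx.2]⟩
    have := (hclosed.closure_subset_iff.2 hsub) hcl
    simp only [Set.mem_inter_iff, Set.mem_preimage, Set.mem_Ici] at this
    linarith [this.2]
  -- t₀ > T^2
  have hT2γ : (T ^ (2:ℝ)) ^ (-γ) = 1/2 := by
    rw [← Real.rpow_mul hT0.le]
    have : (2:ℝ) * (-γ) = -(2*γ) := by ring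
    rw [this, Real.rpow_neg hT0.le, hkey]
    norm_num
  have ht₀T2 : T ^ (2:ℝ) < t₀ := by
    by_contra h
    push_neg at h
    have h8 : ψ t₀ < 1/8 := hT₀ t₀ (by linarith)
    have : (1:ℝ)/8 ≤ 1/4 * t₀ ^ (-γ) := by
      have : (T ^ (2:ℝ)) ^ (-γ) ≤ t₀ ^ (-γ) :=
        Real.rpow_le_rpow_of_nonpos ht₀0 h (by linarith)
      rw [hT2γ] at this
      linarith
    linarith
  -- apply the recursion at t₀ with u = t₀^(-1/2)
  have ht₀1 : (1:ℝ) < t₀ := by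
    have : (1:ℝ) ≤ T ^ (2:ℝ) := Real.one_le_rpow hT1 (by norm_num)
    linarith
  have hu0 : 0 < t₀ ^ (-(1/2) : ℝ) := Real.rpow_pos_of_pos ht₀0 _
  have hu1 : t₀ ^ (-(1/2) : ℝ) ≤ 1 :=
    Real.rpow_le_one_of_one_le_of_nonpos ht₀1.le (by norm_num)
  have h1 := hrec t₀ ht₀0 _ ⟨hu0, hu1⟩
  have htu : t₀ * t₀ ^ (-(1/2) : ℝ) = t₀ ^ ((1:ℝ)/2) := by
    nth_rewrite 1 [← Real.rpow_one t₀]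
    rw [← Real.rpow_add ht₀0]
    norm_num
  have hsT : T ≤ t₀ ^ ((1:ℝ)/2) := by
    calc T = (T ^ (2:ℝ)) ^ ((1:ℝ)/2) := by
          rw [← Real.rpow_mul hT0.le]; norm_num
      _ ≤ t₀ ^ ((1:ℝ)/2) :=
          Real.rpow_le_rpow (Real.rpow_nonneg hT0.le _) ht₀T2.le (by norm_num)
  have hslt : t₀ ^ ((1:ℝ)/2) < t₀ := by
    nth_rewrite 2 [← Real.rpow_one t₀]
    exact Real.rpow_lt_rpow_of_exponent_lt ht₀1 (by norm_num)
  have hψs := hlt _ hsT hslt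
  -- square bound
  have hsq : ψ (t₀ * t₀ ^ (-(1/2) : ℝ)) ^ 2 ≤ 1/16 * t₀ ^ (-γ) := by
    have h0 : 0 ≤ ψ (t₀ * t₀ ^ (-(1/2) : ℝ)) := hnn _ (by positivity)
    have hbb : ψ (t₀ * t₀ ^ (-(1/2) : ℝ)) ≤ 1/4 * (t₀ ^ ((1:ℝ)/2)) ^ (-γ) := by
      rw [htu]; exact hψs
    calc ψ (t₀ * t₀ ^ (-(1/2) : ℝ)) ^ 2 ≤ (1/4 * (t₀ ^ ((1:ℝ)/2)) ^ (-γ)) ^ 2 :=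
          pow_le_pow_left₀ h0 hbb 2
      _ = 1/16 * t₀ ^ (-γ) := by
          rw [mul_pow, ← Real.rpow_natCast ((t₀ ^ ((1:ℝ)/2)) ^ (-γ)) 2,
            ← Real.rpow_mul (Real.rpow_nonneg ht₀0.le _), ← Real.rpow_mul ht₀0.le]
          norm_num
          congr 1
          ring
  -- u^(2β) = t₀^(-β)
  have hA : (t₀ ^ (-(1/2) : ℝ)) ^ (2*β) = t₀ ^ (-β) := by
    rw [← Real.rpow_mul ht₀0.le]
    congr 1
    ring
  -- K t₀^(-β) < 1/8 t₀^(-γ)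
  have hKsmall : K * t₀ ^ (-β) < 1/8 * t₀ ^ (-γ) := by
    have h8K : 8*K < t₀ ^ (β - γ) := by
      have hmono : (T ^ (2:ℝ)) ^ (β - γ) < t₀ ^ (β - γ) :=
        Real.rpow_lt_rpow (Real.rpow_nonneg hT0.le _) ht₀T2 (by linarith)
      have hcomp : (T ^ (2:ℝ)) ^ (β - γ) = T ^ (2*β) * (T ^ (2*γ))⁻¹ := by
        rw [← Real.rpow_mul hT0.le, ← Real.rpow_neg hT0.le, ← Real.rpow_add hT0]
        congr 1; ring
      rw [hcomp, hkey] at hmono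
      nlinarith
    have hpos : 0 < t₀ ^ (-β) := Real.rpow_pos_of_pos ht₀0 _
    have := mul_lt_mul_of_pos_right h8K hpos
    rw [← Real.rpow_add ht₀0] at this
    have heq : β - γ + -β = -γ := by ring
    rw [heq] at this
    linarith
  have hfin : ψ t₀ < 1/4 * t₀ ^ (-γ) := by
    calc ψ t₀ ≤ K * (t₀ ^ (-(1/2):ℝ)) ^ (2*β) + 2 * ψ (t₀ * t₀ ^ (-(1/2):ℝ)) ^ 2 := h1
      _ = K * t₀ ^ (-β) + 2 * ψ (t₀ * t₀ ^ (-(1/2):ℝ)) ^ 2 := by rw [hA]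
      _ ≤ K * t₀ ^ (-β) + 2 * (1/16 * t₀ ^ (-γ)) := by linarith
      _ < 1/8 * t₀ ^ (-γ) + 2 * (1/16 * t₀ ^ (-γ)) := by linarith
      _ = 1/4 * t₀ ^ (-γ) := by ring
  linarith

theorem stmt_8 (β : ℝ) (hβ : 0 < β) (ψ : ℝ → ℝ)
    (hcont : ContinuousOn ψ (Set.Ici 0)) (hnn : ∀ t, 0 ≤ t → 0 ≤ ψ t)
    (hlim : Tendsto ψ atTop (nhds 0))
    (K : ℝ) (hK : 0 < K)
    (hrec : ∀ t : ℝ, 0 < t → ∀ u ∈ Set.Ioc (0 : ℝ) 1, ψ t ≤ K * u ^ (2 * β) + 2 * ψ (t * u) ^ 2) :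
    ∀ α : ℝ, α < β → ψ =O[atTop] fun t => t ^ (-α) := by
  intro α hα
  obtain ⟨γ₀, T₀, hγ₀, hγ₀β, hT₀, hb₀⟩ := initial_decay β hβ ψ hcont hnn hlim K hK hrec
  set c : ℝ := γ₀ * (β - α) / (2 * β) with hcdef
  have hc : 0 < c := by
    apply div_pos (by nlinarith) (by positivity)
  have main : ∀ n : ℕ, ∃ γ C T, γ₀ ≤ γ ∧ γ ≤ β ∧ 0 ≤ C ∧ 1 ≤ T ∧
      (∀ t, T ≤ t → ψ t ≤ C * t ^ (-γ)) ∧ (α < γ ∨ γ₀ + n * c ≤ γ) := by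
    intro n
    induction n with
    | zero =>
      exact ⟨γ₀, 1/4, T₀, le_refl _, hγ₀β, by norm_num, hT₀, hb₀,
        Or.inr (by norm_num)⟩
    | succ n ih =>
      obtain ⟨γ, C, T, hγ₀γ, hγβ, hC, hT, hb, hdisj⟩ := ih
      have hγpos : 0 < γ := lt_of_lt_of_le hγ₀ hγ₀γ
      have hbγ : 0 < β + γ := by linarith
      obtain ⟨C', T', hC', hT', hb'⟩ := boot_step β hβ ψ hnn K hK hrec γ C T hγpos hγβ hT hb
      set γ' : ℝ := 2 * β * γ / (β + γ) with hγ'def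
      have hγγ' : γ ≤ γ' := by
        rw [hγ'def, le_div_iff₀ hbγ]
        nlinarith
      have hγ'β : γ' ≤ β := by
        rw [hγ'def, div_le_iff₀ hbγ]
        nlinarith
      refine ⟨γ', C', T', le_trans hγ₀γ hγγ', hγ'β, hC', hT', hb', ?_⟩
      rcases hdisj with h | h
      · exact Or.inl (lt_of_lt_of_le h hγγ')
      · rcases lt_or_ge α γ' with h' | h'
        · exact Or.inl h'
        · right
          have hγα : γ ≤ α := le_trans hγγ' h'
          have hid : γ' = γ + γ * (β - γ) / (β + γ) := by
            rw [hγ'def]; field_simp; ring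
          have hstep : c ≤ γ * (β - γ) / (β + γ) := by
            rw [hcdef]
            apply div_le_div₀ (by nlinarith) (by nlinarith) hbγ (by linarith)
          rw [hid]
          push_cast
          linarith
  obtain ⟨N, hN⟩ := exists_nat_gt ((α - γ₀) / c)
  obtain ⟨γ, C, T, hγ₀γ, hγβ, hC, hT, hb, hdisj⟩ := main N
  have hαγ : α < γ := by
    rcases hdisj with h | h
    · exact h
    · have : α - γ₀ < N * c := by
        rw [div_lt_iff₀ hc] at hN
        linarith
      linarith
  rw [Asymptotics.isBigO_iff]
  refine ⟨C, ?_⟩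
  filter_upwards [eventually_ge_atTop (max T 1)] with t ht
  have ht1 : (1:ℝ) ≤ t := le_trans (le_max_right _ _) ht
  have htT : T ≤ t := le_trans (le_max_left _ _) ht
  have ht0 : (0:ℝ) < t := by linarith
  rw [Real.norm_eq_abs, Real.norm_eq_abs, abs_of_nonneg (hnn t ht0.le),
    abs_of_nonneg (Real.rpow_nonneg ht0.le _)]
  calc ψ t ≤ C * t ^ (-γ) := hb t htT
    _ ≤ C * t ^ (-α) :=
      mul_le_mul_of_nonneg_left
        (Real.rpow_le_rpow_of_exponent_le ht1 (by linarith)) hC
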